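/- Let X be a compact Hausdorff (or paracompact Hausdorff) topological space and A a unital Banach algebra. An n-tuple (f_1,...,f_n) of continuous functions X → A belongs to Lg_n(C(X,A)) if and only if (f_1(x),...,f_n(x)) ∈ Lg_n(A) for every x ∈ X. That is, Lg_n(C(X,A)) ≅ C(X, Lg_n(A)). -/
import Mathlib


/-- `Lg n A`: the set of `n`-tuples generating `A` as a left ideal. -/
def Lg (A : Type*) [Ring A] (n : ℕ) : Set (Fin n → A) :=
  {a | ∃ w : Fin n → A, ∑ i, w i * a i = 1}

/-- For a compact Hausdorff space `X` and a unital Banach algebra `A`, an `n`-tuple of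
continuous functions `X → A` is in `Lg_n(C(X,A))` iff it is pointwise in `Lg_n(A)`,
i.e. `Lg_n(C(X,A)) ≅ C(X, Lg_n(A))`. -/
theorem stmt_9 (X : Type*) [TopologicalSpace X] [CompactSpace X] [T2Space X]
    (A : Type*) [NormedRing A] [NormedAlgebra ℂ A] [CompleteSpace A] (n : ℕ)
    (f : Fin n → C(X, A)) :
    f ∈ Lg C(X, A) n ↔ ∀ x : X, (fun i => f i x) ∈ Lg A n := by
  constructor
  · rintro ⟨w, hw⟩ x
    refine ⟨fun i => w i x, ?_⟩
    have := congrArg (fun g : C(X, A) => g x) hw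
    simpa using this
  · intro hpt
    choose w hw using hpt
    set g : X → C(X, A) := fun k => ∑ i, ContinuousMap.const X (w k i) * f i with hg
    have hgk : ∀ k y, g k y = ∑ i, w k i * f i y := by
      intro k y; simp [hg]
    have hg1 : ∀ k, IsUnit (g k k) := fun k => by rw [hgk, hw k]; exact isUnit_one
    set U : X → Set X := fun k => {y | IsUnit (g k y)} with hU
    have hUopen : ∀ k, IsOpen (U k) := fun k => Units.isOpen.preimage (g k).continuous
    have hUcov : (Set.univ : Set X) ⊆ ⋃ k, U k := fun y _ => Set.mem_iUnion.2 ⟨y, hg1 y⟩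
    obtain ⟨φ, hφ⟩ := PartitionOfUnity.exists_isSubordinate isClosed_univ U hUopen hUcov
    have hcont : ∀ i : Fin n, Continuous fun y => ∑ᶠ k, φ k y • (Ring.inverse (g k y) * w k i) := by
      intro i
      refine φ.continuous_finsum_smul ?_
      intro k y hy
      have hyU : y ∈ U k := hφ k hy
      have h1 : ContinuousAt Ring.inverse ((g k) y) :=
        hyU.unit_spec ▸ NormedRing.inverse_continuousAt hyU.unit
      exact (h1.comp (g k).continuous.continuousAt).mul continuousAt_const
    refine ⟨fun i => ⟨fun y => ∑ᶠ k, φ k y • (Ring.inverse (g k y) * w k i), hcont i⟩, ?_⟩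
    ext y
    have hfin : {k | φ k y ≠ 0}.Finite := φ.locallyFinite.point_finite y
    set S : Finset X := hfin.toFinset with hS
    have hSsub : ∀ c : X → A, Function.support (fun k => φ k y • c k) ⊆ S := by
      intro c k hk
      rw [hS, Finset.mem_coe, hfin.mem_toFinset]
      intro h0
      apply hk
      simp [h0]
    have key : ∀ i : Fin n, (∑ᶠ k, φ k y • (Ring.inverse (g k y) * w k i))
        = ∑ k ∈ S, φ k y • (Ring.inverse (g k y) * w k i) :=
      fun i => finsum_eq_sum_of_support_subset _ (hSsub _)
    simp only [ContinuousMap.sum_apply, ContinuousMap.mul_apply, ContinuousMap.coe_mk,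
      ContinuousMap.one_apply]
    calc ∑ i, (∑ᶠ k, φ k y • (Ring.inverse (g k y) * w k i)) * f i y
        = ∑ i, ∑ k ∈ S, (φ k y • (Ring.inverse (g k y) * w k i)) * f i y := by
          simp only [key, Finset.sum_mul]
      _ = ∑ k ∈ S, φ k y • (Ring.inverse (g k y) * ∑ i, w k i * f i y) := by
          rw [Finset.sum_comm]
          refine Finset.sum_congr rfl fun k _ => ?_
          rw [Finset.mul_sum, Finset.smul_sum]
          refine Finset.sum_congr rfl fun i _ => ?_
          rw [smul_mul_assoc, mul_assoc]
      _ = ∑ k ∈ S, φ k y • (1 : A) := by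
          refine Finset.sum_congr rfl fun k hk => ?_
          have hk' : (φ k) y ≠ 0 := by rw [hS, hfin.mem_toFinset] at hk; exact hk
          have hyU : y ∈ U k := hφ k (subset_tsupport _ hk')
          rw [← hgk, Ring.inverse_mul_cancel _ hyU]
      _ = (∑ k ∈ S, φ k y) • (1 : A) := by rw [Finset.sum_smul]
      _ = (1 : ℝ) • (1 : A) := by
          congr 1
          rw [← finsum_eq_sum_of_support_subset _ (s := S) (by
            intro k hk
            rw [hS, Finset.mem_coe, hfin.mem_toFinset]
            exact hk)]
          exact φ.sum_eq_one (Set.mem_univ y)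
      _ = 1 := one_smul _ _
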